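/- Let V₁ and V₂ be finite-dimensional real vector spaces, φ : V₁ → V₂ a linear isomorphism, and Φ : 𝕋V₁ → 𝕋V₂ a linear isomorphism satisfying ⟨Φ(x), Φ(y)⟩ = ⟨x, y⟩ for all x, y ∈ 𝕋V₁ (isometry of the hyperbolic pairings) and pr₁(Φ(x)) = φ(pr₁(x)) for all x ∈ 𝕋V₁ (compatibility with the anchors). Then there exists a unique alternating bilinear form B on V₁ such that Φ(v, α) = (φ(v), (α + B(v, ·)) ∘ φ⁻¹) for all (v, α) ∈ 𝕋V₁; that is, Φ = φ̄ ∘ e^B is the composition of the B-field transformation e^B(v, α) = (v, α + B(v, ·)) with the induced map φ̄(v, α) = (φ(v), α ∘ φ⁻¹). -/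

import Mathlib

/-- The hyperbolic pairing on the double `𝕋V = V × V*`:
`⟨(v, α), (w, β)⟩ = α(w) + β(v)`. -/
noncomputable def hyp (V : Type*) [AddCommGroup V] [Module ℝ V] :
    LinearMap.BilinForm ℝ (V × Module.Dual ℝ V) :=
  LinearMap.mk₂ ℝ (fun x y => x.2 y.1 + y.2 x.1)
    (fun x x' y => by
      simp only [Prod.fst_add, Prod.snd_add, LinearMap.add_apply, map_add]; ring)
    (fun c x y => by
      simp only [Prod.smul_fst, Prod.smul_snd, LinearMap.smul_apply, map_smul, smul_eq_mul]; ring)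
    (fun x y y' => by
      simp only [Prod.fst_add, Prod.snd_add, LinearMap.add_apply, map_add]; ring)
    (fun c x y => by
      simp only [Prod.smul_fst, Prod.smul_snd, LinearMap.smul_apply, map_smul, smul_eq_mul]; ring)

/-- An isomorphism `Φ : 𝕋V₁ → 𝕋V₂` which is an isometry of the hyperbolic pairings and is
compatible with the anchors, covering `φ`, factors uniquely as `Φ = φ̄ ∘ e^B` for an alternating
bilinear form `B` on `V₁`. -/
theorem stmt13 (V₁ V₂ : Type*) [AddCommGroup V₁] [Module ℝ V₁] [FiniteDimensional ℝ V₁]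
    [AddCommGroup V₂] [Module ℝ V₂] [FiniteDimensional ℝ V₂]
    (φ : V₁ ≃ₗ[ℝ] V₂)
    (Φ : (V₁ × Module.Dual ℝ V₁) ≃ₗ[ℝ] (V₂ × Module.Dual ℝ V₂))
    (hisom : ∀ x y : V₁ × Module.Dual ℝ V₁, hyp V₂ (Φ x) (Φ y) = hyp V₁ x y)
    (hanch : ∀ x : V₁ × Module.Dual ℝ V₁, (Φ x).1 = φ x.1) :
    ∃! Bf : LinearMap.BilinForm ℝ V₁,
      (∀ v, Bf v v = 0) ∧
      ∀ (v : V₁) (α : Module.Dual ℝ V₁),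
        Φ (v, α) = (φ v, (α + Bf v) ∘ₗ (φ.symm : V₂ →ₗ[ℝ] V₁)) := by
    classical
  set F : V₁ →ₗ[ℝ] Module.Dual ℝ V₂ :=
    { toFun := fun v => (Φ (v, 0)).2
      map_add' := fun v w => by
        have h : ((v + w, 0) : V₁ × Module.Dual ℝ V₁) = (v, 0) + (w, 0) := by simp
        rw [h, map_add]; rfl
      map_smul' := fun c v => by
        have h : ((c • v, 0) : V₁ × Module.Dual ℝ V₁) = c • (v, 0) := by simp
        rw [h, map_smul]; rfl } with hF
  have hF0 : ∀ v w, F v (φ w) + F w (φ v) = 0 := by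
    intro v w
    have := hisom (v, 0) (w, 0)
    simpa [hyp, hF, hanch (v, (0 : Module.Dual ℝ V₁)), hanch (w, (0 : Module.Dual ℝ V₁))]
      using this
  have key : ∀ (v : V₁) (α : Module.Dual ℝ V₁) (w : V₁),
      (Φ (v, α)).2 (φ w) = α w + F v (φ w) := by
    intro v α w
    have h1 := hisom (v, α) (w, 0)
    simp only [hyp, LinearMap.mk₂_apply] at h1
    rw [hanch (v, α), hanch (w, (0 : Module.Dual ℝ V₁))] at h1
    have h2 : (Φ (w, 0)).2 (φ v) = F w (φ v) := rfl
    have h3 := hF0 v w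
    simp only [LinearMap.zero_apply, add_zero] at h1
    linarith [h1, h3]
  refine ⟨LinearMap.mk₂ ℝ (fun v w => F v (φ w))
      (fun v v' w => by simp) (fun c v w => by simp)
      (fun v w w' => by simp) (fun c v w => by simp), ⟨?_, ?_⟩, ?_⟩
  · intro v
    have := hF0 v v
    simp only [LinearMap.mk₂_apply]
    linarith
  · intro v α
    have h1 := hanch (v, α)
    refine Prod.ext h1 ?_
    apply LinearMap.ext
    intro u
    have hu : u = φ (φ.symm u) := by simp
    rw [hu, key v α (φ.symm u)]
    simp
  · intro B' ⟨hB'0, hB'⟩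
    apply LinearMap.ext; intro v
    apply LinearMap.ext; intro w
    have h := hB' v 0
    have : (Φ (v, (0 : Module.Dual ℝ V₁))).2 (φ w) = B' v w := by
      rw [h]; simp
    simp only [LinearMap.mk₂_apply]
    rw [hF]
    simpa using this.symm
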